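/- Let n be a nonzero integer. The norm-preserving group acts transitively on the set of 3×3 integer matrices of determinant n if and only if n is squarefree; that is, (for all X, Y ∈ M₃(ℤ) with det(X) = det(Y) = n there exist P, Q ∈ GL₃(ℤ) with det(P) = det(Q) and P·X·Q⁻¹ = Y) if and only if n is squarefree. -/

import Mathlib

open Matrix

namespace TransSF

abbrev M3 := Matrix (Fin 3) (Fin 3) ℤ

/-- Equivalence of matrices under GL₃(ℤ) × GL₃(ℤ). -/
def MEquiv (X Y : M3) : Prop := ∃ P Q : M3, IsUnit P ∧ IsUnit Q ∧ P * X * Q = Y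

lemma MEquiv.trans {X Y Z : M3} (h1 : MEquiv X Y) (h2 : MEquiv Y Z) : MEquiv X Z := by
  obtain ⟨P, Q, hP, hQ, rfl⟩ := h1
  obtain ⟨P', Q', hP', hQ', rfl⟩ := h2
  exact ⟨P' * P, Q * Q', hP'.mul hP, hQ.mul hQ', by simp only [mul_assoc]⟩

lemma MEquiv.symm {X Y : M3} (h : MEquiv X Y) : MEquiv Y X := by
  obtain ⟨P, Q, hP, hQ, rfl⟩ := h
  refine ⟨↑hP.unit⁻¹, ↑hQ.unit⁻¹, Units.isUnit _, Units.isUnit _, ?_⟩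
  calc (↑hP.unit⁻¹ : M3) * (P * X * Q) * ↑hQ.unit⁻¹
      = (↑hP.unit⁻¹ * ↑hP.unit) * X * (↑hQ.unit * ↑hQ.unit⁻¹) := by
        rw [hP.unit_spec, hQ.unit_spec]; simp only [mul_assoc]
    _ = X := by rw [Units.inv_mul, Units.mul_inv, one_mul, mul_one]

lemma MEquiv.det_eq {X Y : M3} (h : MEquiv X Y) :
    Y.det = X.det ∨ Y.det = -X.det := by
  obtain ⟨P, Q, hP, hQ, rfl⟩ := h
  have hP' : IsUnit P.det := (isUnit_iff_isUnit_det P).mp hP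
  have hQ' : IsUnit Q.det := (isUnit_iff_isUnit_det Q).mp hQ
  rw [det_mul, det_mul]
  rcases Int.isUnit_iff.mp hP' with h1 | h1 <;>
    rcases Int.isUnit_iff.mp hQ' with h2 | h2 <;>
      rw [h1, h2] <;> [left; right; right; left] <;> ring

lemma unit_of_det_one (A : M3) (h : A.det = 1) : IsUnit A :=
  (isUnit_iff_isUnit_det A).mpr (h ▸ isUnit_one)

lemma diag3 (a b c : ℤ) : diagonal ![a, b, c] = !![a, 0, 0; 0, b, 0; 0, 0, c] := by
  ext i j
  fin_cases i <;> fin_cases j <;>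
    simp [Matrix.diagonal, Matrix.vecHead, Matrix.vecTail]

/-- Combine coordinates 0 and 1. -/
lemma combine01 (a b c u v : ℤ) (h : u * a + v * b = 1) :
    MEquiv (diagonal ![a, b, c]) (diagonal ![1, a * b, c]) := by
  refine ⟨!![u, v, 0; -b, a, 0; 0, 0, 1], !![1, -(v*b), 0; 1, u*a, 0; 0, 0, 1],
    unit_of_det_one _ ?_, unit_of_det_one _ ?_, ?_⟩
  · rw [det_fin_three]; simp [Matrix.vecHead, Matrix.vecTail]; linear_combination h
  · rw [det_fin_three]; simp [Matrix.vecHead, Matrix.vecTail]; linear_combination h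
  · rw [diag3, diag3]
    ext i j
    fin_cases i <;> fin_cases j <;>
      simp [Matrix.mul_apply, Fin.sum_univ_three, Matrix.vecHead, Matrix.vecTail] <;>
      first
        | ring1
        | linear_combination h
        | linear_combination (a * b) * h

/-- Combine coordinates 1 and 2. -/
lemma combine12 (a b c u v : ℤ) (h : u * b + v * c = 1) :
    MEquiv (diagonal ![a, b, c]) (diagonal ![a, 1, b * c]) := by
  refine ⟨!![1, 0, 0; 0, u, v; 0, -c, b], !![1, 0, 0; 0, 1, -(v*c); 0, 1, u*b],
    unit_of_det_one _ ?_, unit_of_det_one _ ?_, ?_⟩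
  · rw [det_fin_three]; simp [Matrix.vecHead, Matrix.vecTail]; linear_combination h
  · rw [det_fin_three]; simp [Matrix.vecHead, Matrix.vecTail]; linear_combination h
  · rw [diag3, diag3]
    ext i j
    fin_cases i <;> fin_cases j <;>
      simp [Matrix.mul_apply, Fin.sum_univ_three, Matrix.vecHead, Matrix.vecTail] <;>
      first
        | ring1
        | linear_combination h
        | linear_combination (b * c) * h

lemma flip0 (a b c : ℤ) : MEquiv (diagonal ![a, b, c]) (diagonal ![-a, b, c]) := by
  refine ⟨!![-1, 0, 0; 0, 1, 0; 0, 0, 1], 1,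
    (isUnit_iff_isUnit_det _).mpr (Int.isUnit_iff.mpr (Or.inr ?_)), isUnit_one, ?_⟩
  · rw [det_fin_three]; simp [Matrix.vecHead, Matrix.vecTail]
  · rw [diag3, diag3, mul_one]
    ext i j
    fin_cases i <;> fin_cases j <;>
      simp [Matrix.mul_apply, Fin.sum_univ_three, Matrix.vecHead, Matrix.vecTail]

/-- Smith-normal-form-lite: every integer 3×3 matrix with nonzero determinant is
GL-equivalent to a diagonal matrix. -/
lemma exists_diagonal (X : M3) (hX : X.det ≠ 0) :
    ∃ a : Fin 3 → ℤ, MEquiv X (diagonal a) := by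
  classical
  set s : Module.Basis (Fin 3) ℤ (Fin 3 → ℤ) := Pi.basisFun ℤ (Fin 3) with hs
  set f : (Fin 3 → ℤ) →ₗ[ℤ] (Fin 3 → ℤ) := Matrix.toLin s s X with hf
  have hXf : LinearMap.toMatrix s s f = X := LinearMap.toMatrix_toLin s s X
  have hfmv : ∀ w, f w = X.mulVec w := by
    intro w
    rw [hf, hs, Matrix.toLin_eq_toLin', Matrix.toLin'_apply]
  have hinj : Function.Injective f := by
    intro w w' hww
    have h2 : X.adjugate.mulVec (X.mulVec w) = X.adjugate.mulVec (X.mulVec w') := by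
      rw [← hfmv, ← hfmv, hww]
    rw [mulVec_mulVec, mulVec_mulVec, adjugate_mul, smul_mulVec, smul_mulVec,
      one_mulVec, one_mulVec] at h2
    exact smul_right_injective (Fin 3 → ℤ) hX h2
  set N : Submodule ℤ (Fin 3 → ℤ) := LinearMap.range f with hN
  set e : (Fin 3 → ℤ) ≃ₗ[ℤ] N := LinearEquiv.ofInjective f hinj with he
  obtain ⟨m, snf⟩ := N.smithNormalForm s
  have hm : m = 3 := by
    have h1 : Module.finrank ℤ N = m := by
      rw [Module.finrank_eq_card_basis snf.bN, Fintype.card_fin]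
    have h2 : Module.finrank ℤ (Fin 3 → ℤ) = Module.finrank ℤ N := e.finrank_eq
    have h3 : Module.finrank ℤ (Fin 3 → ℤ) = 3 := by simp
    omega
  subst hm
  set g : Fin 3 ≃ Fin 3 := Equiv.ofBijective snf.f
    ((Finite.injective_iff_bijective).mp snf.f.injective) with hg
  set c : Module.Basis (Fin 3) ℤ (Fin 3 → ℤ) := snf.bN.map e.symm with hc
  set d : Module.Basis (Fin 3) ℤ (Fin 3 → ℤ) := snf.bM.reindex g.symm with hd
  have key : ∀ i, f (c i) = snf.a i • d i := by
    intro i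
    have h0 : f (c i) = ↑(e (c i)) := (LinearEquiv.ofInjective_apply f (h := hinj) (c i)).symm
    have h1 : e (c i) = snf.bN i := by
      rw [hc, Module.Basis.map_apply, LinearEquiv.apply_symm_apply]
    rw [h0, h1, snf.snf i]
    congr 1
    rw [hd, Module.Basis.reindex_apply, Equiv.symm_symm, hg, Equiv.ofBijective_apply]
  have hdiag : LinearMap.toMatrix c d f = diagonal snf.a := by
    ext j i
    rw [LinearMap.toMatrix_apply, key i, LinearEquiv.map_smul, Module.Basis.repr_self,
      Finsupp.smul_single]
    by_cases hij : j = i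
    · subst hij; simp
    · simp [Finsupp.single_apply, Matrix.diagonal_apply, hij, Ne.symm hij]
  have hinv1 : Invertible (d.toMatrix s) := d.invertibleToMatrix s
  have hinv2 : Invertible (s.toMatrix c) := s.invertibleToMatrix c
  refine ⟨snf.a, d.toMatrix s, s.toMatrix c, isUnit_of_invertible _, isUnit_of_invertible _, ?_⟩
  rw [← hXf, ← hdiag, basis_toMatrix_mul_linearMap_toMatrix,
    linearMap_toMatrix_mul_basis_toMatrix]

/-- Coprimality from squarefreeness. -/
lemma coprime_of_mul_dvd {n a b : ℤ} (hsq : Squarefree n) (h : a * b ∣ n) :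
    IsCoprime a b := by
  rw [Int.isCoprime_iff_gcd_eq_one]
  have hdvd : (Int.gcd a b : ℤ) * (Int.gcd a b : ℤ) ∣ n :=
    dvd_trans (mul_dvd_mul (Int.gcd_dvd_left a b) (Int.gcd_dvd_right a b)) h
  have := hsq _ hdvd
  rcases Int.isUnit_iff.mp this with h1 | h1
  · exact_mod_cast h1
  · omega

lemma mequiv_canonical {n : ℤ} (hn : n ≠ 0) (hsq : Squarefree n) (X : M3) (hX : X.det = n) :
    MEquiv X (diagonal ![1, 1, n]) := by
  obtain ⟨a, hE⟩ := exists_diagonal X (hX ▸ hn)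
  have ha : a = ![a 0, a 1, a 2] := by
    funext i; fin_cases i <;> rfl
  rw [ha] at hE
  have hdet : (diagonal ![a 0, a 1, a 2]).det = a 0 * a 1 * a 2 := by
    rw [det_diagonal, Fin.prod_univ_three]; simp; try ring
  -- arrange the product to be exactly n
  have hcases := hE.det_eq
  rw [hX, hdet] at hcases
  obtain ⟨a₀, hE', hprod⟩ : ∃ a₀ : ℤ, MEquiv X (diagonal ![a₀, a 1, a 2]) ∧
      a₀ * a 1 * a 2 = n := by
    rcases hcases with h | h
    · refine ⟨a 0, hE, ?_⟩
      linarith [h]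
    · refine ⟨-(a 0), hE.trans (flip0 _ _ _), ?_⟩
      linarith [h]
  have hcop1 : IsCoprime a₀ (a 1) := by
    refine coprime_of_mul_dvd hsq ⟨a 2, ?_⟩
    linarith [hprod]
  obtain ⟨u, v, huv⟩ := hcop1
  have step1 : MEquiv (diagonal ![a₀, a 1, a 2]) (diagonal ![1, a₀ * a 1, a 2]) :=
    combine01 _ _ _ u v huv
  have hcop2 : IsCoprime (a₀ * a 1) (a 2) := by
    refine coprime_of_mul_dvd hsq ⟨1, ?_⟩
    rw [← hprod]; ring
  obtain ⟨u', v', huv'⟩ := hcop2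
  have step2 : MEquiv (diagonal ![1, a₀ * a 1, a 2]) (diagonal ![1, 1, a₀ * a 1 * a 2]) :=
    combine12 _ _ _ u' v' huv'
  rw [hprod] at step2
  exact (hE'.trans step1).trans step2

end TransSF

open TransSF in
theorem transitive_det_iff_squarefree (n : ℤ) (hn : n ≠ 0) :
    (∀ X Y : Matrix (Fin 3) (Fin 3) ℤ, X.det = n → Y.det = n →
      ∃ P Q : GL (Fin 3) ℤ,
        ((P : Matrix (Fin 3) (Fin 3) ℤ).det = (Q : Matrix (Fin 3) (Fin 3) ℤ).det) ∧
        (P : Matrix (Fin 3) (Fin 3) ℤ) * X * ((Q⁻¹ : GL (Fin 3) ℤ) : Matrix (Fin 3) (Fin 3) ℤ)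
          = Y)
    ↔ Squarefree n := by
  constructor
  · -- transitivity → squarefree
    intro H
    by_contra hns
    obtain ⟨x, hx2, hxu⟩ : ∃ x : ℤ, x * x ∣ n ∧ ¬ IsUnit x := by
      simpa [Squarefree, not_forall] using hns
    have hxabs : x.natAbs ≠ 1 := fun h => hxu (Int.isUnit_iff_natAbs_eq.mpr h)
    obtain ⟨p, hp, hpx⟩ := Int.exists_prime_and_dvd hxabs
    have hp2 : p * p ∣ n := dvd_trans (mul_dvd_mul hpx hpx) hx2
    obtain ⟨m, hm⟩ := hp2
    set X : M3 := diagonal ![1, p, p * m] with hXdef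
    set Y : M3 := diagonal ![1, 1, n] with hYdef
    have hXdet : X.det = n := by
      rw [hXdef, det_diagonal, Fin.prod_univ_three]; simp [hm]; ring
    have hYdet : Y.det = n := by
      rw [hYdef, det_diagonal, Fin.prod_univ_three]; simp
    obtain ⟨P, Q, -, heq⟩ := H X Y hXdet hYdet
    -- adjugate argument
    have hadj : Y.adjugate =
        ((Q⁻¹ : GL (Fin 3) ℤ) : M3).adjugate * (X.adjugate * (P : M3).adjugate) := by
      rw [← heq, adjugate_mul_distrib, adjugate_mul_distrib]
    have hdvdX : ∀ i j, p ∣ X.adjugate i j := by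
      intro i j
      rw [hXdef, diag3, adjugate_fin_three]
      fin_cases i <;> fin_cases j <;> simp
    have hY22 : Y.adjugate 2 2 = 1 := by
      rw [hYdef, diag3, adjugate_fin_three]; simp
    have hpd : p ∣ Y.adjugate 2 2 := by
      rw [hadj, Matrix.mul_apply]
      refine Finset.dvd_sum fun k _ => ?_
      refine Dvd.dvd.mul_left ?_ _
      rw [Matrix.mul_apply]
      refine Finset.dvd_sum fun l _ => ?_
      exact (hdvdX k l).mul_right _
    rw [hY22] at hpd
    exact hp.not_unit (isUnit_of_dvd_one hpd)
  · -- squarefree → transitivity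
    intro hsq X Y hX hY
    have hXY : MEquiv X Y :=
      (mequiv_canonical hn hsq X hX).trans (mequiv_canonical hn hsq Y hY).symm
    obtain ⟨P, Q, hP, hQ, heq⟩ := hXY
    refine ⟨hP.unit, hQ.unit⁻¹, ?_, ?_⟩
    · -- determinant condition
      have hdetY : (P * X * Q).det = n := by rw [heq, hY]
      rw [det_mul, det_mul, hX] at hdetY
      have h1 : P.det * Q.det = 1 := by
        have h0 : n * (P.det * Q.det) = n * 1 := by
          rw [mul_one]; linear_combination hdetY
        exact mul_left_cancel₀ hn h0
      have h2 : ((hQ.unit⁻¹ : GL (Fin 3) ℤ) : M3).det * Q.det = 1 := by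
        have h3 : ((hQ.unit⁻¹ : GL (Fin 3) ℤ) : M3) * Q = 1 := by
          have := Units.inv_mul hQ.unit
          rwa [hQ.unit_spec] at this
        rw [← det_mul, h3, det_one]
      have hPu : (hP.unit : M3) = P := hP.unit_spec
      rw [show ((hP.unit : GL (Fin 3) ℤ) : M3) = P from hPu]
      rcases Int.isUnit_iff.mp ((isUnit_iff_isUnit_det Q).mp hQ) with hq | hq <;>
        rw [hq] at h1 h2 <;> omega
    · simp only [inv_inv, hP.unit_spec, hQ.unit_spec]
      exact heq
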